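/- Let ψ ∈ Ψ(a,b) with b < ∞. Then the fundamental function φ(s) = sup_{p ∈ (a,b)} s^{1/p}/ψ(p) of G(ψ) satisfies lim_{s → 0⁺} (log φ(s))/(log s) = 1/b. -/

import Mathlib

noncomputable section

open MeasureTheory Filter Set Topology
open scoped ENNReal NNReal

/-- The set of exponents `p` with `a < p < b` (where `b : ℝ≥0∞` may be `∞`). -/
def expSet (a : ℝ) (b : ℝ≥0∞) : Set ℝ := {p : ℝ | a < p ∧ ENNReal.ofReal p < b}

/-- The filter of real exponents `p` tending to `b` from below (`p → b⁻`);
when `b = ∞` this amounts to `p → ∞`. -/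
def atBbelow (b : ℝ≥0∞) : Filter ℝ :=
  Filter.comap ENNReal.ofReal (nhdsWithin b (Set.Iio b))

/-- The class `EΨ(a,b)`: continuous `ψ` on `(a,b)` with `ψ(p) ≥ 1` and `ψ(b-0) = ∞`. -/
def IsEPsi (a : ℝ) (b : ℝ≥0∞) (ψ : ℝ → ℝ) : Prop :=
  ContinuousOn ψ (expSet a b) ∧ (∀ p ∈ expSet a b, 1 ≤ ψ p) ∧
    Filter.Tendsto ψ (atBbelow b) Filter.atTop

/-- Norm of the Bilateral Grand Lebesgue space `G(ψ; a, b)` over a measure `μ`: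
`‖f‖_{G(ψ)} = sup_{p ∈ (a,b)} ‖f‖_{L^p(μ)} / ψ(p)`, with values in `ℝ≥0∞`. -/
def GNorm {α : Type*} [MeasurableSpace α] (μ : Measure α) (a : ℝ) (b : ℝ≥0∞)
    (ψ : ℝ → ℝ) (f : α → ℝ) : ℝ≥0∞ :=
  ⨆ p ∈ expSet a b, eLpNorm f (ENNReal.ofReal p) μ / ENNReal.ofReal (ψ p)

/-- The class `Ψ(a,b)` (relative to a measure `μ`): positive continuous `ψ` on `(a,b)`
with `ψ(b-0) = ∞`, admitting a representation `ψ(p) = ‖f‖_{L^p(μ)}` for `p ∈ (a,b)`, where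
the measurable `f` lies in `L^p(μ)` for all `p ∈ (a,b)`. -/
def IsPsi {α : Type*} [MeasurableSpace α] (μ : Measure α) (a : ℝ) (b : ℝ≥0∞)
    (ψ : ℝ → ℝ) : Prop :=
  ContinuousOn ψ (expSet a b) ∧ (∀ p ∈ expSet a b, 0 < ψ p) ∧
    Filter.Tendsto ψ (atBbelow b) Filter.atTop ∧
    ∃ f : α → ℝ, AEStronglyMeasurable f μ ∧
      ∀ p ∈ expSet a b, eLpNorm f (ENNReal.ofReal p) μ = ENNReal.ofReal (ψ p)

/-- The fundamental function `φ(G(ψ;a,b), s) = sup_{p ∈ (a,b)} s^{1/p}/ψ(p)`, real-valued. -/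
def fundR (a : ℝ) (b : ℝ≥0∞) (ψ : ℝ → ℝ) (s : ℝ) : ℝ :=
  ⨆ p : expSet a b, s ^ (1 / (p : ℝ)) / ψ p

/-- The fundamental function `φ(G(ψ;a,b), δ) = sup_{p ∈ (a,b)} δ^{1/p}/ψ(p)`, `ℝ≥0∞`-valued. -/
def fundE (a : ℝ) (b : ℝ≥0∞) (ψ : ℝ → ℝ) (δ : ℝ≥0∞) : ℝ≥0∞ :=
  ⨆ p ∈ expSet a b, δ ^ (1 / p) / ENNReal.ofReal (ψ p)

lemma aux_exists_lb {α : Type*} [MeasurableSpace α] (μ : Measure α)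
    (a : ℝ) (b : ℝ≥0∞) (ha : 1 ≤ a) (hab : ENNReal.ofReal a < b) (hb : b ≠ ⊤) (ψ : ℝ → ℝ)
    (hpos : ∀ p ∈ expSet a b, 0 < ψ p)
    (htend : Filter.Tendsto ψ (atBbelow b) Filter.atTop)
    (f : α → ℝ) (hf : AEStronglyMeasurable f μ)
    (hrep : ∀ p ∈ expSet a b, eLpNorm f (ENNReal.ofReal p) μ = ENNReal.ofReal (ψ p)) :
    ∃ c : ℝ, 0 < c ∧ ∀ p ∈ expSet a b, c ≤ ψ p := by
  have ha0 : (0:ℝ) < a := by linarith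
  set B := b.toReal with hBdef
  have hB : a < B := (ENNReal.ofReal_lt_iff_lt_toReal ha0.le hb).1 hab
  have memIff : ∀ p : ℝ, p ∈ expSet a b ↔ a < p ∧ p < B := by
    intro p
    constructor
    · rintro ⟨h1, h2⟩
      exact ⟨h1, (ENNReal.ofReal_lt_iff_lt_toReal (by linarith) hb).1 h2⟩
    · rintro ⟨h1, h2⟩
      exact ⟨h1, (ENNReal.ofReal_lt_iff_lt_toReal (by linarith) hb).2 h2⟩
  set p0 := (a + B) / 2 with hp0def
  have hp0a : a < p0 := by rw [hp0def]; linarith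
  have hp0B : p0 < B := by rw [hp0def]; linarith
  have hp00 : 0 < p0 := lt_trans ha0 hp0a
  have hp0m : p0 ∈ expSet a b := (memIff p0).2 ⟨hp0a, hp0B⟩
  set g := hf.mk f with hgdef
  have hg : StronglyMeasurable g := hf.stronglyMeasurable_mk
  have hrepg : ∀ p ∈ expSet a b, eLpNorm g (ENNReal.ofReal p) μ = ENNReal.ofReal (ψ p) :=
    fun p hp => (eLpNorm_congr_ae hf.ae_eq_mk).symm.trans (hrep p hp)
  set I : ℝ → ℝ≥0∞ := fun p => ∫⁻ x, (‖g x‖₊ : ℝ≥0∞) ^ p ∂μ with hIdef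
  have hI : ∀ p ∈ expSet a b, I p = ENNReal.ofReal (ψ p) ^ p := by
    intro p hp
    have hp0 : 0 < p := lt_trans ha0 hp.1
    have h1 : eLpNorm g (ENNReal.ofReal p) μ = (I p) ^ p⁻¹ := by
      rw [eLpNorm_eq_lintegral_rpow_enorm_toReal (by simp [ENNReal.ofReal_eq_zero]; linarith)
        (by simp)]
      simp [ENNReal.toReal_ofReal hp0.le, one_div]; rfl
    have h2 : ENNReal.ofReal (ψ p) = (I p) ^ p⁻¹ := (hrepg p hp).symm.trans h1
    rw [h2, ENNReal.rpow_inv_rpow hp0.ne']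
  have hIfin : ∀ p ∈ expSet a b, I p ≠ ⊤ := by
    intro p hp
    rw [hI p hp]
    exact (ENNReal.rpow_lt_top_of_nonneg (lt_trans ha0 hp.1).le ENNReal.ofReal_ne_top).ne
  set S := {x | (1:ℝ≥0∞) ≤ (‖g x‖₊ : ℝ≥0∞)} with hSdef
  have hS : MeasurableSet S := measurableSet_le measurable_const hg.measurable.enorm
  have hm : ∀ p : ℝ, 0 < p → μ S ≤ I p := by
    intro p hp
    calc μ S = ∫⁻ _ in S, 1 ∂μ := (setLIntegral_one S).symm
    _ ≤ ∫⁻ x in S, (‖g x‖₊ : ℝ≥0∞) ^ p ∂μ := by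
        refine setLIntegral_mono' hS fun x hx => ?_
        calc (1:ℝ≥0∞) = 1 ^ p := (ENNReal.one_rpow p).symm
        _ ≤ _ := ENNReal.rpow_le_rpow hx hp.le
    _ ≤ I p := setLIntegral_le_lintegral S _
  rcases eq_or_ne (μ S) 0 with hm0 | hmne
  · exfalso
    have hae : ∀ᵐ x ∂μ, (‖g x‖₊ : ℝ≥0∞) < 1 := by
      filter_upwards [measure_eq_zero_iff_ae_notMem.mp hm0] with x hx
      exact not_le.mp hx
    set C := max 1 (I p0) with hCdef
    have hCt : C ≠ ⊤ := by
      rw [hCdef]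
      simp only [ne_eq, max_eq_top, not_or]
      exact ⟨ENNReal.one_ne_top, hIfin p0 hp0m⟩
    have hbound : ∀ q ∈ expSet a b, p0 ≤ q → ψ q ≤ C.toReal := by
      intro q hq hpq
      have hq0 : 0 < q := lt_trans ha0 hq.1
      have hq1 : (1:ℝ) ≤ q := le_trans ha (le_of_lt hq.1)
      have hIq : I q ≤ I p0 := by
        refine lintegral_mono_ae (hae.mono fun x hx => ?_)
        exact ENNReal.rpow_le_rpow_of_exponent_ge hx.le hpq
      have h2 : ENNReal.ofReal (ψ q) = (I q) ^ q⁻¹ := by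
        rw [hI q hq, ENNReal.rpow_rpow_inv hq0.ne']
      have h3 : (I q) ^ q⁻¹ ≤ (I p0) ^ q⁻¹ :=
        ENNReal.rpow_le_rpow hIq (inv_nonneg.2 hq0.le)
      have h4 : (I p0) ^ q⁻¹ ≤ C := by
        rcases le_total (I p0) 1 with h | h
        · exact le_trans (ENNReal.rpow_le_one h (inv_nonneg.2 hq0.le)) (le_max_left _ _)
        · have hqinv : q⁻¹ ≤ 1 := by
            have := one_div_le_one_div_of_le one_pos hq1
            simpa [one_div] using this
          calc (I p0) ^ q⁻¹ ≤ (I p0) ^ (1:ℝ) :=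
                ENNReal.rpow_le_rpow_of_exponent_le h hqinv
          _ = I p0 := ENNReal.rpow_one _
          _ ≤ C := le_max_right _ _
      have h5 : ENNReal.ofReal (ψ q) ≤ C := h2 ▸ (h3.trans h4)
      exact (ENNReal.ofReal_le_iff_le_toReal hCt).1 h5
    have hev : ∀ᶠ q in atBbelow b, ψ q ≤ C.toReal := by
      have hVmem : Ioo (ENNReal.ofReal p0) b ∈ 𝓝[<] b :=
        Ioo_mem_nhdsLT hp0m.2
      have hpre : ENNReal.ofReal ⁻¹' (Ioo (ENNReal.ofReal p0) b) ∈ atBbelow b :=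
        preimage_mem_comap hVmem
      filter_upwards [hpre] with q hq
      have hq0 : 0 < q :=
        ENNReal.ofReal_pos.1 (lt_trans (ENNReal.ofReal_pos.2 hp00) hq.1)
      have hq0p : p0 < q := (ENNReal.ofReal_lt_ofReal_iff hq0).1 hq.1
      exact hbound q ⟨by linarith, hq.2⟩ hq0p.le
    have hNB : (atBbelow b).NeBot := by
      rw [atBbelow, comap_neBot_iff]
      intro t ht
      obtain ⟨l, _, hsub⟩ := (mem_nhdsLT_iff_exists_Ioo_subset' hab).1 ht
      obtain ⟨x, hx1, hx2⟩ := exists_between (max_lt ‹l ∈ Iio b› hab : max l (ENNReal.ofReal a) < b)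
      have hxt : x ≠ ⊤ := ne_top_of_lt (lt_of_lt_of_le hx2 le_top)
      refine ⟨x.toReal, hsub ⟨?_, ?_⟩⟩
      · rw [ENNReal.ofReal_toReal hxt]
        exact lt_of_le_of_lt (le_max_left _ _) hx1
      · rw [ENNReal.ofReal_toReal hxt]; exact hx2
    obtain ⟨q, h1q, h2q⟩ := ((htend.eventually (eventually_ge_atTop (C.toReal + 1))).and hev).exists
    linarith
  · have hmlt : μ S ≠ ⊤ :=
      ((hm p0 hp00).trans_lt (lt_of_le_of_ne le_top (hIfin p0 hp0m))).ne
    set m' := min (μ S) 1 with hm'def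
    have hm'0 : 0 < m' := lt_min (zero_lt_iff.2 hmne) one_pos
    have hm'1 : m' ≤ 1 := min_le_right _ _
    have hm't : m' ≠ ⊤ := (lt_of_le_of_lt hm'1 ENNReal.one_lt_top).ne
    set c' := m' ^ a⁻¹ with hc'def
    have hc'0 : 0 < c' := ENNReal.rpow_pos hm'0 hm't
    have hc'1 : c' ≤ 1 := ENNReal.rpow_le_one hm'1 (inv_nonneg.2 ha0.le)
    have hc't : c' ≠ ⊤ := (lt_of_le_of_lt hc'1 ENNReal.one_lt_top).ne
    refine ⟨c'.toReal, ENNReal.toReal_pos hc'0.ne' hc't, ?_⟩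
    intro p hp
    have hp0 : 0 < p := lt_trans ha0 hp.1
    have h1 : m' ^ a⁻¹ ≤ m' ^ p⁻¹ := by
      refine ENNReal.rpow_le_rpow_of_exponent_ge hm'1 ?_
      have := one_div_le_one_div_of_le ha0 hp.1.le
      simpa [one_div] using this
    have h2 : m' ^ p⁻¹ ≤ (I p) ^ p⁻¹ :=
      ENNReal.rpow_le_rpow (le_trans (min_le_left _ _) (hm p hp0)) (inv_nonneg.2 hp0.le)
    have h3 : (I p) ^ p⁻¹ = ENNReal.ofReal (ψ p) := by
      rw [hI p hp, ENNReal.rpow_rpow_inv hp0.ne']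
    have h4 : c' ≤ ENNReal.ofReal (ψ p) := h3 ▸ (h1.trans h2)
    have h5 := ENNReal.toReal_mono ENNReal.ofReal_ne_top h4
    rwa [ENNReal.toReal_ofReal (hpos p hp).le] at h5

/-- **Lemma 3, behaviour at `0⁺`.** Let `ψ ∈ Ψ(a,b)` with `b < ∞`. Then the
fundamental function `φ(s) = sup_{p ∈ (a,b)} s^{1/p}/ψ(p)` of `G(ψ)` satisfies
`log φ(s) / log s → 1/b` as `s → 0⁺`. -/
theorem fund_log_limit_at_zero {α : Type*} [MeasurableSpace α] (μ : Measure α) [SigmaFinite μ]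
    (a : ℝ) (b : ℝ≥0∞) (ha : 1 ≤ a) (hab : ENNReal.ofReal a < b) (hb : b ≠ ⊤)
    (ψ : ℝ → ℝ) (hψ : IsPsi μ a b ψ) :
    Tendsto (fun s : ℝ => Real.log (fundR a b ψ s) / Real.log s)
      (𝓝[>] (0 : ℝ)) (𝓝 (b⁻¹.toReal)) := by
  obtain ⟨hcont, hpos, htend, f, hf, hrep⟩ := hψ
  obtain ⟨c, hc0, hc⟩ := aux_exists_lb μ a b ha hab hb ψ hpos htend f hf hrep
  have ha0 : (0:ℝ) < a := by linarith
  set B := b.toReal with hBdef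
  have hB : a < B := (ENNReal.ofReal_lt_iff_lt_toReal ha0.le hb).1 hab
  have hB0 : 0 < B := lt_trans ha0 hB
  have memIff : ∀ p : ℝ, p ∈ expSet a b ↔ a < p ∧ p < B := by
    intro p
    constructor
    · rintro ⟨h1, h2⟩
      exact ⟨h1, (ENNReal.ofReal_lt_iff_lt_toReal (by linarith) hb).1 h2⟩
    · rintro ⟨h1, h2⟩
      exact ⟨h1, (ENNReal.ofReal_lt_iff_lt_toReal (by linarith) hb).2 h2⟩
  set p0 := (a + B) / 2 with hp0def
  have hp0a : a < p0 := by rw [hp0def]; linarith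
  have hp0B : p0 < B := by rw [hp0def]; linarith
  have hp00 : 0 < p0 := lt_trans ha0 hp0a
  have hp0m : p0 ∈ expSet a b := (memIff p0).2 ⟨hp0a, hp0B⟩
  haveI hne : Nonempty (expSet a b) := ⟨⟨p0, hp0m⟩⟩
  have hbinv : b⁻¹.toReal = B⁻¹ := ENNReal.toReal_inv b
  rw [hbinv]
  -- pointwise bound
  have ptbd : ∀ s ∈ Ioo (0:ℝ) 1, ∀ p ∈ expSet a b,
      s ^ (1 / p) / ψ p ≤ s ^ B⁻¹ / c := by
    intro s hs p hp
    have hp' := (memIff p).1 hp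
    have hp0' : 0 < p := lt_trans ha0 hp'.1
    have hnum : s ^ (1/p) ≤ s ^ B⁻¹ := by
      refine Real.rpow_le_rpow_of_exponent_ge hs.1 hs.2.le ?_
      have := one_div_le_one_div_of_le hp0' hp'.2.le
      simpa [one_div] using this
    exact div_le_div₀ (Real.rpow_nonneg hs.1.le _) hnum hc0 (hc p hp)
  have bdd : ∀ s ∈ Ioo (0:ℝ) 1,
      BddAbove (range fun p : expSet a b => s ^ (1 / (p:ℝ)) / ψ p) := by
    intro s hs
    refine ⟨s ^ B⁻¹ / c, ?_⟩
    rintro x ⟨⟨p, hp⟩, rfl⟩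
    exact ptbd s hs p hp
  have keyUB : ∀ s ∈ Ioo (0:ℝ) 1, fundR a b ψ s ≤ s ^ B⁻¹ / c := by
    intro s hs
    exact ciSup_le fun q => ptbd s hs q.1 q.2
  have keyLB : ∀ s ∈ Ioo (0:ℝ) 1, ∀ p (hp : p ∈ expSet a b),
      s ^ (1 / p) / ψ p ≤ fundR a b ψ s := by
    intro s hs p hp
    exact le_ciSup (bdd s hs) ⟨p, hp⟩
  have fpos : ∀ s ∈ Ioo (0:ℝ) 1, 0 < fundR a b ψ s := by
    intro s hs
    exact lt_of_lt_of_le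
      (div_pos (Real.rpow_pos_of_pos hs.1 _) (hpos p0 hp0m)) (keyLB s hs p0 hp0m)
  have hinv : Tendsto (fun s : ℝ => (Real.log s)⁻¹) (𝓝[>] (0:ℝ)) (𝓝 0) := by
    have h1 : Tendsto (fun s : ℝ => -Real.log s) (𝓝[>] (0:ℝ)) atTop :=
      tendsto_neg_atBot_atTop.comp Real.tendsto_log_nhdsGT_zero
    have h2 := h1.inv_tendsto_atTop.neg
    simp only [Pi.inv_apply, neg_neg, inv_neg, neg_zero] at h2
    exact h2
  have hIoo : Ioo (0:ℝ) 1 ∈ 𝓝[>] (0:ℝ) :=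
    Ioo_mem_nhdsGT one_pos
  refine tendsto_order.2 ⟨?_, ?_⟩
  · intro l hl
    have hlim : Tendsto (fun s : ℝ => B⁻¹ - Real.log c * (Real.log s)⁻¹)
        (𝓝[>] (0:ℝ)) (𝓝 B⁻¹) := by
      have := (hinv.const_mul (Real.log c)).const_sub B⁻¹
      simpa using this
    filter_upwards [hIoo, hlim.eventually_const_lt hl] with s hs hls
    refine lt_of_lt_of_le hls ?_
    have hlogs : Real.log s < 0 := Real.log_neg hs.1 hs.2
    have hle : Real.log (fundR a b ψ s) ≤ B⁻¹ * Real.log s - Real.log c := by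
      calc Real.log (fundR a b ψ s) ≤ Real.log (s ^ B⁻¹ / c) :=
            Real.log_le_log (fpos s hs) (keyUB s hs)
      _ = B⁻¹ * Real.log s - Real.log c := by
          rw [Real.log_div (Real.rpow_pos_of_pos hs.1 _).ne' hc0.ne',
            Real.log_rpow hs.1]
    have hdiv := div_le_div_of_nonpos_of_le hlogs.le hle
    have heq : (B⁻¹ * Real.log s - Real.log c) / Real.log s
        = B⁻¹ - Real.log c * (Real.log s)⁻¹ := by
      rw [sub_div, mul_div_cancel_right₀ _ hlogs.ne]; ring
    rw [← heq]
    exact hdiv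
  · intro u hu
    have hu0 : 0 < u := lt_trans (inv_pos.2 hB0) hu
    have huB : u⁻¹ < B := by
      have := one_div_lt_one_div_of_lt (inv_pos.2 hB0) hu
      simpa [one_div] using this
    set p := (max a u⁻¹ + B) / 2 with hpdef
    have hmaxB : max a u⁻¹ < B := max_lt hB huB
    have hpa : a < p := by
      have h1 : a ≤ max a u⁻¹ := le_max_left _ _
      rw [hpdef]; linarith
    have hpB : p < B := by
      rw [hpdef]; linarith
    have hpu : u⁻¹ < p := by
      have h1 : u⁻¹ ≤ max a u⁻¹ := le_max_right _ _
      rw [hpdef]; linarith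
    have hpmem : p ∈ expSet a b := (memIff p).2 ⟨hpa, hpB⟩
    have hp0' : 0 < p := lt_trans ha0 hpa
    have h1pu : 1 / p < u := by
      have := one_div_lt_one_div_of_lt (inv_pos.2 hu0) hpu
      simpa [one_div] using this
    have hlim : Tendsto (fun s : ℝ => 1 / p - Real.log (ψ p) * (Real.log s)⁻¹)
        (𝓝[>] (0:ℝ)) (𝓝 (1 / p)) := by
      have := (hinv.const_mul (Real.log (ψ p))).const_sub (1 / p)
      simpa using this
    filter_upwards [hIoo, hlim.eventually_lt_const h1pu] with s hs hls
    refine lt_of_le_of_lt ?_ hls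
    have hlogs : Real.log s < 0 := Real.log_neg hs.1 hs.2
    have hle : 1 / p * Real.log s - Real.log (ψ p) ≤ Real.log (fundR a b ψ s) := by
      have h1 : Real.log (s ^ (1/p) / ψ p) ≤ Real.log (fundR a b ψ s) :=
        Real.log_le_log (div_pos (Real.rpow_pos_of_pos hs.1 _) (hpos p hpmem))
          (keyLB s hs p hpmem)
      rwa [Real.log_div (Real.rpow_pos_of_pos hs.1 _).ne' (hpos p hpmem).ne',
        Real.log_rpow hs.1] at h1
    have hdiv := div_le_div_of_nonpos_of_le hlogs.le hle
    have heq : (1 / p * Real.log s - Real.log (ψ p)) / Real.log s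
        = 1 / p - Real.log (ψ p) * (Real.log s)⁻¹ := by
      rw [sub_div, mul_div_cancel_right₀ _ hlogs.ne]; ring
    rw [← heq]
    exact hdiv
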